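/- Let P be a finite p-group in CP₂. Then the quotient P/Ω_1(P) is also in CP₂. -/

import Mathlib

/-- Sum of the orders of the elements of a group. -/
noncomputable def psi (G : Type*) [Group G] : ℕ := ∑ᶠ x : G, orderOf x

/-- `Omega p G i` is the subgroup generated by all `x` with `x ^ p ^ i = 1`. -/
def Omega (p : ℕ) (G : Type*) [Group G] (i : ℕ) : Subgroup G :=
  Subgroup.closure {x : G | x ^ p ^ i = 1}

/-- The class `CP₂`: `o(xy) ≤ max (o x) (o y)` for all `x y`. -/
def CP2 (G : Type*) [Group G] : Prop :=
  ∀ x y : G, orderOf (x * y) ≤ max (orderOf x) (orderOf y)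

lemma mem_omega_iff {p : ℕ} (hp : p.Prime) {P : Type*} [Group P] [Finite P]
    (hP : IsPGroup p P) (hcp : CP2 P) (x : P) : x ∈ Omega p P 1 ↔ x ^ p = 1 := by
  haveI : Fact p.Prime := ⟨hp⟩
  constructor
  · intro hx
    have key : ∀ y ∈ Omega p P 1, y ^ p = 1 := by
      intro y hy
      refine Subgroup.closure_induction (fun z hz => by simpa using hz) (one_pow p) ?_ ?_ hy
      · intro a b _ _ ha hb
        have hoa : orderOf a ∣ p := orderOf_dvd_of_pow_eq_one (by simpa using ha)
        have hob : orderOf b ∣ p := orderOf_dvd_of_pow_eq_one (by simpa using hb)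
        have hle : orderOf (a * b) ≤ p := le_trans (hcp a b)
          (max_le (Nat.le_of_dvd hp.pos hoa) (Nat.le_of_dvd hp.pos hob))
        obtain ⟨k, hk⟩ := IsPGroup.iff_orderOf.mp hP (a * b)
        have : orderOf (a * b) ∣ p := by
          rw [hk] at hle ⊢
          rcases Nat.lt_or_ge k 1 with h | h
          · (interval_cases k; simp)
          · have := Nat.pow_le_pow_right hp.one_le h -- p^1 ≤ p^k? no
            have hk1 : k = 1 := le_antisymm
              (by
                by_contra hgt
                push_neg at hgt
                exact absurd hle (not_le.mpr (by
                  calc p = p ^ 1 := (pow_one p).symm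
                  _ < p ^ k := Nat.pow_lt_pow_right hp.one_lt hgt))) h
            simp [hk1]
        exact orderOf_dvd_iff_pow_eq_one.mp this
      · intro a _ ha
        rw [inv_pow, ha, inv_one]
    exact key x hx
  · intro hx
    exact Subgroup.subset_closure (by simpa using hx)

theorem stmt_5 {p : ℕ} (hp : p.Prime) (P : Type*) [Group P] [Finite P]
    (hP : IsPGroup p P) (hcp : CP2 P) [(Omega p P 1).Normal] :
    CP2 (P ⧸ Omega p P 1) := by
  haveI : Fact p.Prime := ⟨hp⟩
  have key : ∀ (z : P) (n : ℕ), ((z : P ⧸ Omega p P 1) ^ n = 1) ↔ z ^ (n * p) = 1 := by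
    intro z n
    rw [← QuotientGroup.mk_pow, QuotientGroup.eq_one_iff, mem_omega_iff hp hP hcp,
      ← pow_mul]
  intro x y
  obtain ⟨a, rfl⟩ := QuotientGroup.mk_surjective x
  obtain ⟨b, rfl⟩ := QuotientGroup.mk_surjective y
  have hQ : IsPGroup p (P ⧸ Omega p P 1) := hP.to_quotient _
  obtain ⟨i, hi⟩ := IsPGroup.iff_orderOf.mp hQ (a : P ⧸ Omega p P 1)
  obtain ⟨j, hj⟩ := IsPGroup.iff_orderOf.mp hQ (b : P ⧸ Omega p P 1)
  set M := max (orderOf (a : P ⧸ Omega p P 1)) (orderOf (b : P ⧸ Omega p P 1)) with hM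
  have hMeq : M = p ^ max i j := by
    rw [hM, hi, hj]
    rcases le_total i j with h | h
    · rw [max_eq_right (Nat.pow_le_pow_right hp.one_le h), max_eq_right h]
    · rw [max_eq_left (Nat.pow_le_pow_right hp.one_le h), max_eq_left h]
  have hdvdM : ∀ (z : P), orderOf (z : P ⧸ Omega p P 1) ∣ M → orderOf z ∣ M * p := by
    intro z hz
    exact (orderOf_dvd_of_pow_eq_one ((key z (orderOf ((z : P ⧸ Omega p P 1)))).mp
      (pow_orderOf_eq_one _))).trans (Nat.mul_dvd_mul_right hz p)
  have ha : orderOf a ∣ M * p := hdvdM a (by rw [hMeq, hi]; exact pow_dvd_pow p (le_max_left i j))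
  have hb : orderOf b ∣ M * p := hdvdM b (by rw [hMeq, hj]; exact pow_dvd_pow p (le_max_right i j))
  have hMp : M * p = p ^ (max i j + 1) := by rw [hMeq, pow_succ]
  have hMppos : 0 < M * p := by rw [hMp]; exact Nat.pow_pos hp.pos
  have hab : orderOf (a * b) ≤ M * p := le_trans (hcp a b)
    (max_le (Nat.le_of_dvd hMppos ha) (Nat.le_of_dvd hMppos hb))
  obtain ⟨c, hc⟩ := IsPGroup.iff_orderOf.mp hP (a * b)
  have habd : orderOf (a * b) ∣ M * p := by
    rw [hc, hMp] at hab ⊢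
    exact pow_dvd_pow p ((Nat.pow_le_pow_iff_right hp.one_lt).mp hab)
  have h1 : ((a : P ⧸ Omega p P 1) * b) ^ M = 1 := by
    rw [← QuotientGroup.mk_mul, key (a * b) M]
    exact orderOf_dvd_iff_pow_eq_one.mp habd
  have hMpos : 0 < M := lt_max_of_lt_left (orderOf_pos _)
  exact Nat.le_of_dvd hMpos (orderOf_dvd_of_pow_eq_one h1)
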